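/- (Kirchhoff's matrix-tree theorem for the first Symanzik polynomial) If G is a finite connected graph, then ψ_G(Y) = Σ_{T} Π_{e ∉ T} Y_e, where T runs over all spanning trees of G. -/

import Mathlib

open scoped Classical
namespace KirchhoffAux
set_option linter.unusedSectionVars false
variable {V E : Type} [Fintype V] [Fintype E] [DecidableEq V] [DecidableEq E]
variable {Q : Type} [CommRing Q]

noncomputable def bd (Q : Type) [CommRing Q] (head tail : E → V) : (E → Q) →ₗ[Q] (V → Q) where
  toFun x := fun v => ∑ e, x e * ((if head e = v then 1 else 0) - (if tail e = v then 1 else 0))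
  map_add' x y := by funext v; simp [add_mul, Finset.sum_add_distrib]
  map_smul' c x := by funext v; simp [Finset.mul_sum, mul_assoc]

noncomputable def extend (Q : Type) [CommRing Q] (T : Finset E) : (↥T → Q) →ₗ[Q] (E → Q) where
  toFun y := fun e => if h : e ∈ T then y ⟨e, h⟩ else 0
  map_add' x y := by funext e; by_cases h : e ∈ T <;> simp [h]
  map_smul' c x := by funext e; by_cases h : e ∈ T <;> simp [h]

lemma extend_mem (T : Finset E) (y : ↥T → Q) {e : E} (he : e ∈ T) :
    extend Q T y e = y ⟨e, he⟩ := dif_pos he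

lemma extend_not_mem (T : Finset E) (y : ↥T → Q) {e : E} (he : e ∉ T) :
    extend Q T y e = 0 := dif_neg he

noncomputable def resv (Q : Type) [CommRing Q] (v0 : V) :
    (V → Q) →ₗ[Q] ({w : V // w ≠ v0} → Q) := LinearMap.funLeft Q Q Subtype.val

/-- weighted sum of boundary values -/
lemma sum_mul_bd (head tail : E → V) (ind : V → Q) (x : E → Q) :
    ∑ v, ind v * bd Q head tail x v = ∑ e, x e * (ind (head e) - ind (tail e)) := by
  simp only [bd, LinearMap.coe_mk, AddHom.coe_mk]
  have swap : ∑ v, ind v * ∑ e, x e * ((if head e = v then (1:Q) else 0) - (if tail e = v then 1 else 0))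
      = ∑ e, ∑ v, ind v * (x e * ((if head e = v then (1:Q) else 0) - (if tail e = v then 1 else 0))) := by
    simp only [Finset.mul_sum]
    exact Finset.sum_comm
  rw [swap]
  apply Finset.sum_congr rfl
  intro e _
  have : ∀ w : V, (∑ v, ind v * (if w = v then (1:Q) else 0)) = ind w := by
    intro w
    rw [Finset.sum_eq_single w] <;> simp +contextual [eq_comm]
  calc ∑ v, ind v * (x e * ((if head e = v then 1 else 0) - (if tail e = v then 1 else 0)))
      = x e * ((∑ v, ind v * (if head e = v then 1 else 0)) - ∑ v, ind v * (if tail e = v then 1 else 0)) := by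
        rw [mul_sub, Finset.mul_sum, Finset.mul_sum]
        rw [← Finset.sum_sub_distrib]
        apply Finset.sum_congr rfl; intro v _; ring
    _ = x e * (ind (head e) - ind (tail e)) := by rw [this, this]

lemma bd_sum_eq_zero (head tail : E → V) (x : E → Q) :
    ∑ v, bd Q head tail x v = 0 := by
  have := sum_mul_bd head tail (fun _ => (1:Q)) x
  simp at this
  simpa using this

lemma bd_eq_zero_of_res (head tail : E → V) (x : E → Q) (v0 : V)
    (h : ∀ w : V, w ≠ v0 → bd Q head tail x w = 0) : bd Q head tail x = 0 := by
  have hsum := bd_sum_eq_zero head tail x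
  rw [Finset.sum_eq_single v0] at hsum
  · funext w
    by_cases hw : w = v0
    · subst hw; exact hsum
    · exact h w hw
  · intro b _ hb; exact h b hb
  · simp

/-- chain lemma -/
lemma exists_chain (head tail : E → V) (P : Finset E) {u v : V}
    (huv : Relation.EqvGen (fun a b : V => ∃ e ∈ P, head e = a ∧ tail e = b) u v) :
    ∃ x : E → Q, (∀ e, e ∉ P → x e = 0) ∧
      bd Q head tail x = Pi.single u 1 - Pi.single v 1 := by
  induction huv with
  | rel a b hab =>
    obtain ⟨e, heP, h1, h2⟩ := hab
    refine ⟨Pi.single e 1, ?_, ?_⟩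
    · intro e' he'
      exact Pi.single_eq_of_ne (by rintro rfl; exact he' heP) 1
    · have : bd Q head tail (Pi.single e 1) = fun v => (1:Q) * ((if head e = v then 1 else 0) - (if tail e = v then 1 else 0)) := by
        funext w
        simp only [bd, LinearMap.coe_mk, AddHom.coe_mk]
        rw [Finset.sum_eq_single e]
        · simp
        · intro e' _ hne; simp [Pi.single_apply, hne]
        · simp
      rw [this]
      funext w
      simp only [Pi.sub_apply, Pi.single_apply, h1, h2, one_mul]
      by_cases hw1 : a = w <;> by_cases hw2 : b = w <;> simp [hw1, hw2, eq_comm]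
  | refl a => exact ⟨0, by simp, by simp⟩
  | symm a b _ ih =>
    obtain ⟨x, hx, hbd⟩ := ih
    exact ⟨-x, fun e he => by simp [hx e he], by simp [hbd]⟩
  | trans a b c _ _ ih1 ih2 =>
    obtain ⟨x, hx, hbd⟩ := ih1
    obtain ⟨y, hy, hbd'⟩ := ih2
    exact ⟨x + y, fun e he => by simp [hx e he, hy e he], by simp [hbd, hbd']⟩

/-- surjectivity of restricted boundary over a connected edge set -/
lemma theta_surj (head tail : E → V) (T : Finset E) (v0 : V)
    (hT : ∀ u v : V, Relation.EqvGen (fun a b : V => ∃ e ∈ T, head e = a ∧ tail e = b) u v) :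
    Function.Surjective ((resv Q v0).comp ((bd Q head tail).comp (extend Q T))) := by
  rw [← LinearMap.range_eq_top, ← top_le_iff]
  have htop : (⊤ : Submodule Q ({w : V // w ≠ v0} → Q)) =
      Submodule.span Q (Set.range (Pi.basisFun Q {w : V // w ≠ v0})) :=
    (Module.Basis.span_eq _).symm
  rw [htop, Submodule.span_le]
  rintro _ ⟨w, rfl⟩
  obtain ⟨x, hx, hbd⟩ := exists_chain (Q := Q) head tail T (hT w.1 v0)
  refine ⟨fun e : ↥T => x e.1, ?_⟩
  have hxe : extend Q T (fun e : ↥T => x e.1) = x := by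
    funext e
    by_cases h : e ∈ T
    · rw [extend_mem T _ h]
    · rw [extend_not_mem T _ h, hx e h]
  simp only [LinearMap.comp_apply, hxe, hbd, resv, LinearMap.funLeft_apply]
  funext w'
  have hw' : w'.1 ≠ v0 := w'.2
  simp [Pi.single_apply, hw', Pi.basisFun_apply]
  by_cases h : w' = w
  · subst h; simp
  · have : w'.1 ≠ w.1 := fun hc => h (Subtype.ext hc)
    simp [this, h]

set_option maxHeartbeats 2000000 in
lemma theta_inj (head tail : E → V) (T : Finset E) (v0 : V)
    (hcard : T.card = Fintype.card {w : V // w ≠ v0})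
    (hT : ∀ u v : V, Relation.EqvGen (fun a b : V => ∃ e ∈ T, head e = a ∧ tail e = b) u v) :
    Function.Injective ((resv Q v0).comp ((bd Q head tail).comp (extend Q T))) := by
  set θ := (resv Q v0).comp ((bd Q head tail).comp (extend Q T)) with hθ
  have hc : Fintype.card {w : V // w ≠ v0} = Fintype.card ↥T := by
    rw [← hcard, Fintype.card_coe]
  let ι : {w : V // w ≠ v0} ≃ ↥T := Fintype.equivOfCardEq hc
  let eqv : ({w : V // w ≠ v0} → Q) ≃ₗ[Q] (↥T → Q) :=
    LinearEquiv.funCongrLeft Q Q ι.symm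
  have hsurj : Function.Surjective (θ.comp (eqv : ({w : V // w ≠ v0} → Q) →ₗ[Q] (↥T → Q))) :=
    by rw [LinearMap.coe_comp, LinearEquiv.coe_coe]; exact (theta_surj head tail T v0 hT).comp eqv.surjective
  have hinj : Function.Injective (θ.comp (eqv : ({w : V // w ≠ v0} → Q) →ₗ[Q] (↥T → Q))) :=
    OrzechProperty.injective_of_surjective_endomorphism _ hsurj
  intro a b hab
  have : eqv.symm a = eqv.symm b → a = b := fun hc => by
    have := congrArg eqv hc; simpa using this
  apply this
  apply hinj
  simp only [LinearMap.comp_apply, LinearEquiv.coe_coe, LinearEquiv.apply_symm_apply]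
  exact hab

section Main
variable (head tail : E → V) {h : ℕ} (γ : Fin h → (E → ℤ))

/-- the square submatrix of the cycle matrix for a size-`h` edge set `S` -/
noncomputable def Bmat (S : Finset E) (hS : S.card = h) : Matrix (Fin h) (Fin h) ℤ :=
  Matrix.of fun i j => γ j (((Finset.equivFinOfCardEq hS).symm i) : ↥S).1

lemma bij_of_tree
    (hli : LinearIndependent ℤ γ)
    (hker : ∀ x : E → ℤ, x ∈ Submodule.span ℤ (Set.range γ) ↔
      ∀ v : V, (∑ e : E, x e *
        ((if head e = v then 1 else 0) - (if tail e = v then 1 else 0))) = 0)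
    (v0 : V) (S : Finset E) (hS : S.card = h)
    (hTcard : Sᶜ.card = Fintype.card {w : V // w ≠ v0})
    (hTconn : ∀ u v : V,
      Relation.EqvGen (fun a b : V => ∃ e ∈ Sᶜ, head e = a ∧ tail e = b) u v) :
    Function.Bijective (Matrix.toLin' (Bmat γ S hS)) := by
  have hker' : ∀ x : E → ℤ, x ∈ Submodule.span ℤ (Set.range γ) ↔ bd ℤ head tail x = 0 := by
    intro x
    rw [hker x]
    constructor
    · intro hx; funext v; exact hx v
    · intro hx v; exact congrFun hx v
  set T := Sᶜ with hT
  set es := Finset.equivFinOfCardEq hS with hes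
  set θ := (resv ℤ v0).comp ((bd ℤ head tail).comp (extend ℤ T)) with hθ
  have θinj : Function.Injective θ := theta_inj head tail T v0 hTcard hTconn
  constructor
  · -- injective
    rw [injective_iff_map_eq_zero]
    intro c hc0
    set x : E → ℤ := ∑ j, c j • γ j with hxdef
    have hxa : ∀ a : E, x a = ∑ j, c j * γ j a := by
      intro a; rw [hxdef]; simp [Finset.sum_apply]
    have hxspan : x ∈ Submodule.span ℤ (Set.range γ) :=
      Submodule.sum_mem _ fun j _ =>
        Submodule.smul_mem _ _ (Submodule.subset_span (Set.mem_range_self j))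
    have hbdx : bd ℤ head tail x = 0 := (hker' x).mp hxspan
    have hxS : ∀ a : E, a ∈ S → x a = 0 := by
      intro a ha
      have := congrFun hc0 (es ⟨a, ha⟩)
      simp only [Matrix.toLin'_apply, Matrix.mulVec, dotProduct, Pi.zero_apply] at this
      rw [hxa]
      rw [← this]
      apply Finset.sum_congr rfl
      intro j _
      simp [Bmat, mul_comm, ← hes]
    have hxT : extend ℤ T (fun t : ↥T => x t.1) = x := by
      funext e
      by_cases he : e ∈ T
      · rw [extend_mem T _ he]
      · rw [extend_not_mem T _ he]
        exact (hxS e (by simpa [hT] using he)).symm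
    have hθ0 : θ (fun t : ↥T => x t.1) = 0 := by
      rw [hθ]
      simp only [LinearMap.comp_apply, hxT, hbdx]
      simp [resv]
    have hy0 : (fun t : ↥T => x t.1) = 0 := θinj (by simpa using hθ0)
    have hx0 : x = 0 := by
      rw [← hxT, hy0]; simp
    have := Fintype.linearIndependent_iff.mp hli c (by rw [← hxdef, hx0])
    funext i; exact this i
  · -- surjective
    intro y
    set x0 : E → ℤ := extend ℤ S (fun a : ↥S => y (es a)) with hx0def
    obtain ⟨z, hz⟩ := theta_surj head tail T v0 hTconn (-(resv ℤ v0 (bd ℤ head tail x0)))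
    set x : E → ℤ := x0 + extend ℤ T z with hxdef
    have hres : ∀ w : V, w ≠ v0 → bd ℤ head tail x w = 0 := by
      intro w hw
      have h1 := congrFun hz ⟨w, hw⟩
      simp only [hθ, LinearMap.comp_apply, resv, LinearMap.funLeft_apply, Pi.neg_apply] at h1
      rw [hxdef, map_add]
      simp only [Pi.add_apply]
      rw [h1]
      simp [resv, LinearMap.funLeft_apply]
    have hbd0 : bd ℤ head tail x = 0 := bd_eq_zero_of_res head tail x v0 hres
    obtain ⟨c, hc⟩ := (Submodule.mem_span_range_iff_exists_fun ℤ).mp ((hker' x).mpr hbd0)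
    refine ⟨c, ?_⟩
    funext i
    have ha := congrFun hc ((es.symm i) : ↥S).1
    simp only [Finset.sum_apply, Pi.smul_apply, smul_eq_mul] at ha
    simp only [Matrix.toLin'_apply, Matrix.mulVec, dotProduct, Bmat]
    have hmem : ((es.symm i) : ↥S).1 ∈ S := ((es.symm i) : ↥S).2
    have hnotT : ((es.symm i) : ↥S).1 ∉ T := by simp [hT, hmem]
    have hxval : x ((es.symm i) : ↥S).1 = y i := by
      rw [hxdef]
      simp only [Pi.add_apply]
      rw [extend_not_mem T _ hnotT, hx0def, extend_mem S _ hmem]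
      simp
    rw [show (∑ j, (Matrix.of fun i j => γ j (((es.symm i) : ↥S).1)) i j * c j) = x (((es.symm i) : ↥S).1) from ?_]
    · exact hxval
    · rw [← ha]
      apply Finset.sum_congr rfl
      intro j _
      simp [mul_comm]
    
lemma det_Bmat_pm_one
    (hli : LinearIndependent ℤ γ)
    (hker : ∀ x : E → ℤ, x ∈ Submodule.span ℤ (Set.range γ) ↔
      ∀ v : V, (∑ e : E, x e *
        ((if head e = v then 1 else 0) - (if tail e = v then 1 else 0))) = 0)
    (v0 : V) (S : Finset E) (hS : S.card = h)
    (hTcard : Sᶜ.card = Fintype.card {w : V // w ≠ v0})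
    (hTconn : ∀ u v : V,
      Relation.EqvGen (fun a b : V => ∃ e ∈ Sᶜ, head e = a ∧ tail e = b) u v) :
    (Bmat γ S hS).det = 1 ∨ (Bmat γ S hS).det = -1 := by
  have hbij := bij_of_tree head tail γ hli hker v0 S hS hTcard hTconn
  have hunit : IsUnit (Bmat γ S hS).det := by
    have h1 := LinearEquiv.isUnit_det' (LinearEquiv.ofBijective (Matrix.toLin' (Bmat γ S hS)) hbij)
    have h2 : ((LinearEquiv.ofBijective (Matrix.toLin' (Bmat γ S hS)) hbij :
        (Fin h → ℤ) →ₗ[ℤ] (Fin h → ℤ))) = Matrix.toLin' (Bmat γ S hS) := rfl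
    rw [h2] at h1
    rwa [← LinearMap.det_toMatrix' (Matrix.toLin' (Bmat γ S hS)), LinearMap.toMatrix'_toLin'] at h1
  exact Int.isUnit_iff.mp hunit


noncomputable def castL (E : Type) [Fintype E] : (E → ℤ) →ₗ[ℤ] (E → ℚ) where
  toFun x := fun e => (x e : ℚ)
  map_add' x y := by funext e; push_cast; simp
  map_smul' c x := by funext e; push_cast; simp

noncomputable def indL (V : Type) [Fintype V] (Cs : Set V) : (V → ℚ) →ₗ[ℚ] ℚ where
  toFun z := ∑ w, (if w ∈ Cs then (1:ℚ) else 0) * z w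
  map_add' x y := by simp [mul_add, Finset.sum_add_distrib]
  map_smul' c x := by
    simp only [RingHom.id_apply, smul_eq_mul, Pi.smul_apply, Finset.mul_sum]
    apply Finset.sum_congr rfl; intros; ring

lemma indL_single (Cs : Set V) (w : V) :
    indL V Cs (Pi.single w 1) = if w ∈ Cs then 1 else 0 := by
  simp only [indL, LinearMap.coe_mk, AddHom.coe_mk]
  rw [Finset.sum_eq_single w] <;> simp +contextual [Pi.single_apply, eq_comm]

lemma indL_bd (Cs : Set V) (head tail : E → V) (x : E → ℚ) :
    indL V Cs (bd ℚ head tail x) =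
      ∑ e, x e * ((if head e ∈ Cs then (1:ℚ) else 0) - (if tail e ∈ Cs then 1 else 0)) := by
  show ∑ w, (if w ∈ Cs then (1:ℚ) else 0) * bd ℚ head tail x w = _
  rw [sum_mul_bd]

lemma kerQ_eq_span
    (hh : h + Fintype.card V = Fintype.card E + 1)
    (hli : LinearIndependent ℤ γ)
    (hker : ∀ x : E → ℤ, x ∈ Submodule.span ℤ (Set.range γ) ↔
      ∀ v : V, (∑ e : E, x e *
        ((if head e = v then 1 else 0) - (if tail e = v then 1 else 0))) = 0)
    (v0 : V)
    (hconn : ∀ u v : V,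
      Relation.EqvGen (fun a b : V => ∃ e : E, head e = a ∧ tail e = b) u v) :
    LinearMap.ker (bd ℚ head tail) =
      Submodule.span ℚ (Set.range fun i (e : E) => ((γ i e : ℚ))) := by
  set γQ : Fin h → (E → ℚ) := fun i e => ((γ i e : ℚ)) with hγQ
  have hcast : LinearIndependent ℤ γQ := by
    have hkercast : LinearMap.ker (castL E) = ⊥ := by
      rw [LinearMap.ker_eq_bot']
      intro m hm
      funext e
      have := congrFun hm e
      simpa [castL] using this
    exact hli.map' (castL E) hkercast
  have hQli : LinearIndependent ℚ γQ := (LinearIndependent.iff_fractionRing ℤ ℚ).mp hcast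
  have hspanrank : Module.finrank ℚ (Submodule.span ℚ (Set.range γQ)) = h := by
    rw [finrank_span_eq_card hQli, Fintype.card_fin]
  have hle : Submodule.span ℚ (Set.range γQ) ≤ LinearMap.ker (bd ℚ head tail) := by
    rw [Submodule.span_le]
    rintro _ ⟨i, rfl⟩
    simp only [SetLike.mem_coe, LinearMap.mem_ker]
    funext v
    have h0 := (hker (γ i)).mp (Submodule.subset_span (Set.mem_range_self i)) v
    have h1 := congrArg (fun z : ℤ => (z : ℚ)) h0
    push_cast [apply_ite (fun z : ℤ => (z : ℚ))] at h1
    show (∑ e, (γ i e : ℚ) * ((if head e = v then 1 else 0) - (if tail e = v then 1 else 0))) = 0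
    convert h1 using 1
  have hVcard : Fintype.card {w : V // w ≠ v0} = Fintype.card V - 1 := by
    have := Fintype.card_subtype_compl (fun w : V => w = v0)
    rw [Fintype.card_subtype_eq] at this
    exact this
  have hrange : Fintype.card V - 1 ≤ Module.finrank ℚ (LinearMap.range (bd ℚ head tail)) := by
    have hconn' : ∀ u v : V, Relation.EqvGen
        (fun a b : V => ∃ e ∈ (Finset.univ : Finset E), head e = a ∧ tail e = b) u v := by
      intro u v
      refine Relation.EqvGen.mono ?_ _ _ (hconn u v)
      rintro a b ⟨e, h1, h2⟩
      exact ⟨e, Finset.mem_univ e, h1, h2⟩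
    have hsurj : Function.Surjective ((resv ℚ v0).comp (bd ℚ head tail)) := by
      intro z
      obtain ⟨y, hy⟩ := theta_surj head tail Finset.univ v0 hconn' z
      exact ⟨extend ℚ Finset.univ y, by simpa [LinearMap.comp_apply] using hy⟩
    have h1 : LinearMap.range ((resv ℚ v0).comp (bd ℚ head tail)) = ⊤ :=
      LinearMap.range_eq_top.mpr hsurj
    rw [LinearMap.range_comp] at h1
    have h2 : Module.finrank ℚ
        (Submodule.map (resv ℚ v0) (LinearMap.range (bd ℚ head tail))) = Fintype.card V - 1 := by
      rw [h1, finrank_top, Module.finrank_pi, hVcard]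
    calc Fintype.card V - 1
        = Module.finrank ℚ (Submodule.map (resv ℚ v0) (LinearMap.range (bd ℚ head tail))) := h2.symm
      _ ≤ Module.finrank ℚ (LinearMap.range (bd ℚ head tail)) := Submodule.finrank_map_le _ _
  have hkerle : Module.finrank ℚ (LinearMap.ker (bd ℚ head tail)) ≤ h := by
    have hrn := LinearMap.finrank_range_add_finrank_ker (bd ℚ head tail)
    rw [Module.finrank_pi] at hrn
    have hV1 : 1 ≤ Fintype.card V := Fintype.card_pos_iff.mpr ⟨v0⟩
    omega
  exact (Submodule.eq_of_le_of_finrank_le hle (by rw [hspanrank]; exact hkerle)).symm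

lemma det_Bmat_zero
    (hh : h + Fintype.card V = Fintype.card E + 1)
    (hli : LinearIndependent ℤ γ)
    (hker : ∀ x : E → ℤ, x ∈ Submodule.span ℤ (Set.range γ) ↔
      ∀ v : V, (∑ e : E, x e *
        ((if head e = v then 1 else 0) - (if tail e = v then 1 else 0))) = 0)
    (hconn : ∀ u v : V,
      Relation.EqvGen (fun a b : V => ∃ e : E, head e = a ∧ tail e = b) u v)
    (v0 : V) (S : Finset E) (hS : S.card = h)
    (hnot : ¬ ∀ u v : V,
      Relation.EqvGen (fun a b : V => ∃ e ∈ Sᶜ, head e = a ∧ tail e = b) u v) :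
    (Bmat γ S hS).det = 0 := by
  by_contra hdet
  set T := Sᶜ with hT
  set γQ : Fin h → (E → ℚ) := fun i e => ((γ i e : ℚ)) with hγQ
  set es := Finset.equivFinOfCardEq hS with hes
  set BQ : Matrix (Fin h) (Fin h) ℚ := (Int.castRingHom ℚ).mapMatrix (Bmat γ S hS) with hBQ
  have hdQ : BQ.det ≠ 0 := by
    rw [hBQ, ← RingHom.map_det]
    simpa using hdet
  have hBQinj : Function.Injective (Matrix.toLin' BQ) := by
    have hinv : BQ⁻¹ * BQ = 1 := Matrix.nonsing_inv_mul BQ (isUnit_iff_ne_zero.mpr hdQ)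
    have h2 : ∀ c : Fin h → ℚ, Matrix.toLin' BQ⁻¹ (Matrix.toLin' BQ c) = c := by
      intro c
      rw [← LinearMap.comp_apply, ← Matrix.toLin'_mul, hinv, Matrix.toLin'_one, LinearMap.id_apply]
    intro a b hab
    calc a = Matrix.toLin' BQ⁻¹ (Matrix.toLin' BQ a) := (h2 a).symm
      _ = Matrix.toLin' BQ⁻¹ (Matrix.toLin' BQ b) := by rw [hab]
      _ = b := h2 b
  have hkerspan := kerQ_eq_span head tail γ hh hli hker v0 hconn
  have θQinj : ∀ y : ↥T → ℚ, bd ℚ head tail (extend ℚ T y) = 0 → y = 0 := by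
    intro y hy
    have hmem : extend ℚ T y ∈ Submodule.span ℚ (Set.range γQ) := by
      rw [← hkerspan]
      exact LinearMap.mem_ker.mpr hy
    obtain ⟨c, hc⟩ := (Submodule.mem_span_range_iff_exists_fun ℚ).mp hmem
    have hc0 : Matrix.toLin' BQ c = 0 := by
      funext i
      simp only [Matrix.toLin'_apply, Matrix.mulVec, dotProduct, Pi.zero_apply]
      have ha := congrFun hc (((es.symm i) : ↥S).1)
      simp only [Finset.sum_apply, Pi.smul_apply, smul_eq_mul] at ha
      have hzero : extend ℚ T y (((es.symm i) : ↥S).1) = 0 :=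
        extend_not_mem T y (by simp [hT, ((es.symm i) : ↥S).2])
      rw [hzero] at ha
      rw [← ha]
      apply Finset.sum_congr rfl
      intro j _
      simp [hBQ, Bmat, hγQ, mul_comm, ← hes]
    have hczero : c = 0 := hBQinj (by rw [hc0]; simp)
    have hx0 : extend ℚ T y = 0 := by
      rw [← hc, hczero]; simp
    funext t
    have h3 := congrFun hx0 t.1
    rw [extend_mem T y t.2] at h3
    simpa using h3
  push_neg at hnot
  obtain ⟨u, v, huv⟩ := hnot
  set C : Set V := {w | Relation.EqvGen (fun a b : V => ∃ e ∈ T, head e = a ∧ tail e = b) u w}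
    with hC
  have huC : u ∈ C := Relation.EqvGen.refl u
  have hvC : v ∉ C := huv
  have hedge : ∀ e ∈ T, ((head e ∈ C) ↔ (tail e ∈ C)) := by
    intro e he
    constructor
    · intro hhd
      exact Relation.EqvGen.trans _ _ _ hhd (Relation.EqvGen.rel _ _ ⟨e, he, rfl, rfl⟩)
    · intro htl
      exact Relation.EqvGen.trans _ _ _ htl
        (Relation.EqvGen.symm _ _ (Relation.EqvGen.rel _ _ ⟨e, he, rfl, rfl⟩))
  set F := indL V C with hF
  set G := indL V Cᶜ with hG
  set P := F.prod G with hP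
  have hPsurj : Function.Surjective P := by
    intro p
    refine ⟨p.1 • (Pi.single u 1 : V → ℚ) + p.2 • (Pi.single v 1 : V → ℚ), ?_⟩
    have hFu : F (Pi.single u 1) = 1 := by rw [hF, indL_single]; simp [huC]
    have hFv : F (Pi.single v 1) = 0 := by rw [hF, indL_single]; simp [hvC]
    have hGu : G (Pi.single u 1) = 0 := by rw [hG, indL_single]; simp [huC]
    have hGv : G (Pi.single v 1) = 1 := by rw [hG, indL_single]; simp [hvC]
    simp [hP, LinearMap.prod_apply, map_add, map_smul, hFu, hFv, hGu, hGv]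
  have hrankP : 2 + Module.finrank ℚ (LinearMap.ker P) = Fintype.card V := by
    have hrn := LinearMap.finrank_range_add_finrank_ker P
    rw [Module.finrank_pi, LinearMap.range_eq_top.mpr hPsurj, finrank_top] at hrn
    rw [← hrn]
    congr 1
    simp [Module.finrank_prod]
  have hmemP : ∀ y : ↥T → ℚ, bd ℚ head tail (extend ℚ T y) ∈ LinearMap.ker P := by
    intro y
    rw [LinearMap.mem_ker]
    have key : ∀ Cs : Set V, (∀ e ∈ T, ((head e ∈ Cs) ↔ (tail e ∈ Cs))) →
        indL V Cs (bd ℚ head tail (extend ℚ T y)) = 0 := by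
      intro Cs hCs
      rw [indL_bd]
      apply Finset.sum_eq_zero
      intro e _
      by_cases he : e ∈ T
      · have := hCs e he
        by_cases hhd : head e ∈ Cs
        · simp [hhd, this.mp hhd]
        · have htl : tail e ∉ Cs := fun htl => hhd (this.mpr htl)
          simp [hhd, htl]
      · simp [extend_not_mem T y he]
    have hedge' : ∀ e ∈ T, ((head e ∈ Cᶜ) ↔ (tail e ∈ Cᶜ)) := by
      intro e he
      simp only [Set.mem_compl_iff]
      exact not_congr (hedge e he)
    have hFz := key C hedge
    have hGz := key Cᶜ hedge'
    rw [hP]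
    simp only [LinearMap.prod_apply, Function.prod]
    rw [← hF] at hFz
    rw [← hG] at hGz
    rw [hFz, hGz]
    rfl
  let θ' : (↥T → ℚ) →ₗ[ℚ] ↥(LinearMap.ker P) :=
    LinearMap.codRestrict _ ((bd ℚ head tail).comp (extend ℚ T)) hmemP
  have hθ'inj : Function.Injective θ' := by
    rw [injective_iff_map_eq_zero]
    intro y hy
    apply θQinj y
    have := congrArg Subtype.val hy
    simpa [θ', LinearMap.codRestrict] using this
  have hfr := LinearMap.finrank_le_finrank_of_injective hθ'inj
  rw [Module.finrank_pi, Fintype.card_coe] at hfr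
  have hTcard : S.card + T.card = Fintype.card E := Finset.card_add_card_compl S
  have hV1 : 1 ≤ Fintype.card V := Fintype.card_pos_iff.mpr ⟨u⟩
  omega

open MvPolynomial in
lemma inner_sum (S : Finset E) (hS : S.card = h) :
    ∑ σ : Equiv.Perm (Fin h),
      ((∏ i, (MvPolynomial.X ((((Finset.equivFinOfCardEq hS).symm (σ i) : ↥S) : E)) *
         MvPolynomial.C (γ i ((((Finset.equivFinOfCardEq hS).symm (σ i) : ↥S) : E))))) *
       MvPolynomial.C ((Matrix.of fun i j : Fin h =>
          γ j ((((Finset.equivFinOfCardEq hS).symm (σ i) : ↥S) : E))).det)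
        : MvPolynomial E ℤ)
    = MvPolynomial.C ((Bmat γ S hS).det ^ 2) * ∏ e ∈ S, MvPolynomial.X e := by
  set es := Finset.equivFinOfCardEq hS with hes
  have hXprod : ∀ σ : Equiv.Perm (Fin h),
      (∏ i, MvPolynomial.X (((es.symm (σ i) : ↥S) : E)) : MvPolynomial E ℤ) =
        ∏ e ∈ S, MvPolynomial.X e := by
    intro σ
    rw [Equiv.prod_comp σ (fun k => (MvPolynomial.X ((es.symm k : ↥S) : E) : MvPolynomial E ℤ))]
    rw [Equiv.prod_comp es.symm (fun a : ↥S => (MvPolynomial.X (a : E) : MvPolynomial E ℤ))]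
    exact Finset.prod_coe_sort S _
  have hdet : ∀ σ : Equiv.Perm (Fin h),
      (Matrix.of fun i j : Fin h => γ j (((es.symm (σ i) : ↥S) : E))).det =
        ((Equiv.Perm.sign σ : ℤ)) * (Bmat γ S hS).det := by
    intro σ
    have hsub : (Matrix.of fun i j : Fin h => γ j (((es.symm (σ i) : ↥S) : E))) =
        (Bmat γ S hS).submatrix σ id := rfl
    rw [hsub, Matrix.det_permute]
    norm_cast
  have step1 : ∀ σ : Equiv.Perm (Fin h),
      ((∏ i, (MvPolynomial.X (((es.symm (σ i) : ↥S) : E)) *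
         MvPolynomial.C (γ i (((es.symm (σ i) : ↥S) : E))))) *
       MvPolynomial.C ((Matrix.of fun i j : Fin h =>
          γ j (((es.symm (σ i) : ↥S) : E))).det) : MvPolynomial E ℤ)
      = (∏ e ∈ S, MvPolynomial.X e) *
          MvPolynomial.C ((Equiv.Perm.sign σ : ℤ) *
            ((∏ i, γ i (((es.symm (σ i) : ↥S) : E))) * (Bmat γ S hS).det)) := by
    intro σ
    rw [Finset.prod_mul_distrib, hXprod σ, hdet σ, ← map_prod, mul_assoc, ← map_mul]
    congr 1
    ring
  rw [Finset.sum_congr rfl (fun σ _ => step1 σ)]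
  rw [← Finset.mul_sum, ← map_sum]
  have hleib : ∑ σ : Equiv.Perm (Fin h),
      (Equiv.Perm.sign σ : ℤ) * ((∏ i, γ i (((es.symm (σ i) : ↥S) : E))) * (Bmat γ S hS).det)
      = (Bmat γ S hS).det ^ 2 := by
    have : ∑ σ : Equiv.Perm (Fin h),
        (Equiv.Perm.sign σ : ℤ) * (∏ i, γ i (((es.symm (σ i) : ↥S) : E)))
        = (Bmat γ S hS).det := by
      rw [Matrix.det_apply]
      apply Finset.sum_congr rfl
      intro σ _
      rw [Units.smul_def, smul_eq_mul]
      rfl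
    calc ∑ σ : Equiv.Perm (Fin h),
        (Equiv.Perm.sign σ : ℤ) * ((∏ i, γ i (((es.symm (σ i) : ↥S) : E))) * (Bmat γ S hS).det)
        = (∑ σ : Equiv.Perm (Fin h),
            (Equiv.Perm.sign σ : ℤ) * (∏ i, γ i (((es.symm (σ i) : ↥S) : E)))) * (Bmat γ S hS).det := by
          rw [Finset.sum_mul]
          apply Finset.sum_congr rfl
          intro σ _
          ring
      _ = (Bmat γ S hS).det ^ 2 := by rw [this]; ring
  rw [hleib, mul_comm]

noncomputable def dS (γ : Fin h → (E → ℤ)) (S : Finset E) : ℤ :=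
  if hS : S.card = h then (Bmat γ S hS).det else 0

open MvPolynomial in
lemma det_M_eq :
    Matrix.det (Matrix.of fun i j : Fin h =>
        ∑ e : E, MvPolynomial.X e * MvPolynomial.C (γ i e * γ j e)) =
    ∑ S ∈ Finset.univ.filter (fun S : Finset E => S.card = h),
      MvPolynomial.C ((dS γ S) ^ 2) * ∏ e ∈ S, MvPolynomial.X e := by
  have h1 : Matrix.det (Matrix.of fun i j : Fin h =>
        ∑ e : E, (X e * C (γ i e * γ j e) : MvPolynomial E ℤ))
      = ∑ r : Fin h → E, Matrix.detRowAlternating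
          (fun i => (X (r i) * C (γ i (r i))) • (fun j => (C (γ j (r i)) : MvPolynomial E ℤ))) := by
    show Matrix.detRowAlternating _ = _
    have hrows : (Matrix.of fun i j : Fin h => ∑ e : E, (X e * C (γ i e * γ j e) : MvPolynomial E ℤ))
        = fun i => ∑ e : E, (X e * C (γ i e)) • (fun j => (C (γ j e) : MvPolynomial E ℤ)) := by
      funext i j
      simp only [Matrix.of_apply, Finset.sum_apply, Pi.smul_apply, smul_eq_mul, map_mul]
      apply Finset.sum_congr rfl
      intro e _
      ring
    rw [hrows]
    exact Matrix.detRowAlternating.toMultilinearMap.map_sum _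
  have h2 : ∀ r : Fin h → E,
      Matrix.detRowAlternating
          (fun i => (X (r i) * C (γ i (r i))) • (fun j => (C (γ j (r i)) : MvPolynomial E ℤ)))
      = (∏ i, (X (r i) * C (γ i (r i)) : MvPolynomial E ℤ)) *
          C ((Matrix.of fun i j : Fin h => γ j (r i)).det) := by
    intro r
    have key := Matrix.detRowAlternating.toMultilinearMap.map_smul_univ
      (fun i => (X (r i) * C (γ i (r i)) : MvPolynomial E ℤ))
      (fun i => (fun j => (C (γ j (r i)) : MvPolynomial E ℤ)))
    simp only [AlternatingMap.coe_multilinearMap] at key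
    rw [key, smul_eq_mul]
    congr 1
    have : (fun i => fun j => (C (γ j (r i)) : MvPolynomial E ℤ))
        = (C : ℤ →+* MvPolynomial E ℤ).mapMatrix (Matrix.of fun i j : Fin h => γ j (r i)) := rfl
    show Matrix.det _ = _
    rw [this, ← RingHom.map_det]
  rw [h1, Finset.sum_congr rfl (fun r _ => h2 r)]
  set t : (Fin h → E) → MvPolynomial E ℤ := fun r =>
    (∏ i, (X (r i) * C (γ i (r i)) : MvPolynomial E ℤ)) *
      C ((Matrix.of fun i j : Fin h => γ j (r i)).det) with ht
  show ∑ r : Fin h → E, t r = _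
  rw [← Finset.sum_filter_add_sum_filter_not Finset.univ (fun r : Fin h → E => Function.Injective r) t]
  have hnon : ∑ r ∈ Finset.univ.filter (fun r : Fin h → E => ¬ Function.Injective r), t r = 0 := by
    apply Finset.sum_eq_zero
    intro r hr
    obtain ⟨a, b, hab, hne⟩ := Function.not_injective_iff.mp (Finset.mem_filter.mp hr).2
    have hdet0 : (Matrix.of fun i j : Fin h => γ j (r i)).det = 0 := by
      apply Matrix.det_zero_of_row_eq hne
      funext j
      simp [hab]
    rw [ht]
    simp [hdet0]
  rw [hnon, add_zero]
  rw [← Finset.sum_fiberwise_of_maps_to (g := fun r : Fin h → E => Finset.image r Finset.univ)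
    (t := Finset.univ.filter (fun S : Finset E => S.card = h)) ?_ t]
  swap
  · intro r hr
    rw [Finset.mem_filter]
    refine ⟨Finset.mem_univ _, ?_⟩
    rw [Finset.card_image_of_injective _ (Finset.mem_filter.mp hr).2]
    simp
  apply Finset.sum_congr rfl
  intro S hSmem
  have hS : S.card = h := (Finset.mem_filter.mp hSmem).2
  set es := Finset.equivFinOfCardEq hS with hes
  rw [show dS γ S = (Bmat γ S hS).det from dif_pos hS, ← inner_sum γ S hS]
  have hmemS : ∀ (r : Fin h → E), Finset.image r Finset.univ = S → ∀ k, r k ∈ S :=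
    fun r him k => him ▸ Finset.mem_image_of_mem r (Finset.mem_univ k)
  let iFun : (r : Fin h → E) →
      r ∈ (Finset.univ.filter (fun r : Fin h → E => Function.Injective r)).filter
        (fun r => Finset.image r Finset.univ = S) → Equiv.Perm (Fin h) := fun r hr =>
    Equiv.ofBijective (fun k => es ⟨r k, hmemS r (Finset.mem_filter.mp hr).2 k⟩)
      (by
        rw [← Finite.injective_iff_bijective]
        intro k₁ k₂ hk
        exact (Finset.mem_filter.mp (Finset.mem_filter.mp hr).1).2
          (congrArg Subtype.val (es.injective hk)))
  refine Finset.sum_bij' iFun (fun σ _ => fun k => ((es.symm (σ k) : ↥S) : E)) ?_ ?_ ?_ ?_ ?_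
  · intro r hr; exact Finset.mem_univ _
  · -- j lands in the fiber
    intro σ _
    rw [Finset.mem_filter]
    constructor
    · rw [Finset.mem_filter]
      refine ⟨Finset.mem_univ _, ?_⟩
      intro k₁ k₂ hk
      exact σ.injective (es.symm.injective (Subtype.coe_injective hk))
    · ext a
      simp only [Finset.mem_image, Finset.mem_univ, true_and]
      constructor
      · rintro ⟨k, rfl⟩
        exact (es.symm (σ k)).2
      · intro ha
        exact ⟨σ.symm (es ⟨a, ha⟩), by simp⟩
  · -- left inverse
    intro r hr
    funext k
    simp [iFun, Equiv.ofBijective_apply, Equiv.symm_apply_apply]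
  · -- right inverse
    intro σ _
    apply Equiv.ext
    intro k
    simp only [iFun, Equiv.ofBijective_apply]
    rw [Subtype.coe_eta, Equiv.apply_symm_apply]
  · -- values agree
    intro r hr
    have hcomp : (fun k => ((es.symm (iFun r hr k) : ↥S) : E)) = r := by
      funext k
      simp [iFun, Equiv.ofBijective_apply, Equiv.symm_apply_apply]
    show t r = t (fun k => ((es.symm (iFun r hr k) : ↥S) : E))
    rw [hcomp]
end Main
end KirchhoffAux


/-- Kirchhoff's matrix-tree theorem for the first Symanzik polynomial: for a finite
connected graph `G = (V, E, head, tail)`, the determinant of the Gram matrix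
`M_{ij} = Σ_e Y_e γ_i(e) γ_j(e)` of a `ℤ`-basis `γ₁,…,γ_h` of `H₁(G,ℤ) = ker ∂ ⊆ ℤ^E`
(where `h + |V| = |E| + 1`) equals `Σ_T Π_{e ∉ T} Y_e`, the sum running over all
spanning trees `T` of `G`. -/
theorem kirchhoff_first_symanzik
    {V E : Type} [Fintype V] [Fintype E] [DecidableEq V] [DecidableEq E]
    (head tail : E → V)
    (hconn : ∀ u v : V,
      Relation.EqvGen (fun a b : V => ∃ e : E, head e = a ∧ tail e = b) u v)
    (h : ℕ) (hh : h + Fintype.card V = Fintype.card E + 1)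
    (γ : Fin h → (E → ℤ))
    (hli : LinearIndependent ℤ γ)
    (hker : ∀ x : E → ℤ, x ∈ Submodule.span ℤ (Set.range γ) ↔
      ∀ v : V, (∑ e : E, x e *
        ((if head e = v then 1 else 0) - (if tail e = v then 1 else 0))) = 0) :
    Matrix.det (Matrix.of fun i j : Fin h =>
        ∑ e : E, MvPolynomial.X e * MvPolynomial.C (γ i e * γ j e)) =
    ∑ T ∈ Finset.univ.filter (fun T : Finset E =>
        T.card + 1 = Fintype.card V ∧
        ∀ u v : V,
          Relation.EqvGen (fun a b : V => ∃ e ∈ T, head e = a ∧ tail e = b) u v),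
      ∏ e ∈ Tᶜ, (MvPolynomial.X e : MvPolynomial E ℤ) := by
  have hle : h ≤ Fintype.card E := by
    have hcard := hli.fintype_card_le_finrank
    simpa using hcard
  have hV : 0 < Fintype.card V := by omega
  obtain ⟨v0⟩ := Fintype.card_pos_iff.mp hV
  have hVcard : Fintype.card {w : V // w ≠ v0} = Fintype.card V - 1 := by
    have := Fintype.card_subtype_compl (fun w : V => w = v0)
    rwa [Fintype.card_subtype_eq] at this
  rw [KirchhoffAux.det_M_eq γ]
  have hstep : ∀ S ∈ Finset.univ.filter (fun S : Finset E => S.card = h),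
      (MvPolynomial.C ((KirchhoffAux.dS γ S) ^ 2) * ∏ e ∈ S, MvPolynomial.X e : MvPolynomial E ℤ)
      = if (∀ u v : V, Relation.EqvGen (fun a b : V => ∃ e ∈ Sᶜ, head e = a ∧ tail e = b) u v)
        then ∏ e ∈ S, MvPolynomial.X e else 0 := by
    intro S hSmem
    have hS : S.card = h := (Finset.mem_filter.mp hSmem).2
    have hdSeq : KirchhoffAux.dS γ S = (KirchhoffAux.Bmat γ S hS).det := dif_pos hS
    by_cases hconnT : ∀ u v : V,
        Relation.EqvGen (fun a b : V => ∃ e ∈ Sᶜ, head e = a ∧ tail e = b) u v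
    · have hTcard : Sᶜ.card = Fintype.card {w : V // w ≠ v0} := by
        have hc := Finset.card_add_card_compl S
        rw [hVcard]
        omega
      rcases KirchhoffAux.det_Bmat_pm_one head tail γ hli hker v0 S hS hTcard hconnT with h1 | h1 <;>
        rw [if_pos hconnT, hdSeq, h1] <;> norm_num
    · have h0 := KirchhoffAux.det_Bmat_zero head tail γ hh hli hker hconn v0 S hS hconnT
      rw [if_neg hconnT, hdSeq, h0]
      simp
  rw [Finset.sum_congr rfl hstep]
  rw [← Finset.sum_filter, Finset.filter_filter]
  refine Finset.sum_nbij' (i := fun S => Sᶜ) (j := fun T => Tᶜ) ?_ ?_ ?_ ?_ ?_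
  · intro S hSm
    beta_reduce
    rw [Finset.mem_filter] at hSm ⊢
    obtain ⟨-, hS, hc⟩ := hSm
    refine ⟨Finset.mem_univ _, ?_, hc⟩
    have hcc := Finset.card_add_card_compl S
    omega
  · intro T hTm
    beta_reduce
    rw [Finset.mem_filter] at hTm ⊢
    obtain ⟨-, hT, hc⟩ := hTm
    refine ⟨Finset.mem_univ _, ?_, ?_⟩
    · have hcc := Finset.card_add_card_compl T
      omega
    · rwa [compl_compl]
  · intro S _; exact compl_compl S
  · intro T _; exact compl_compl T
  · intro S _
    rw [compl_compl]
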